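/- Mean-dispersion weak duality in the multivariate case: let d : ℝⁿ → ℝᵐ, Ξ ⊆ ℝⁿ measurable, and suppose λ₀ ∈ ℝ, λ₁ ∈ ℝⁿ, λ₂ ∈ ℝᵐ, λ₃ ∈ ℝ satisfy λ₀ + λ₁ᵀμ + λ₂ᵀσ ≤ 0, the pointwise inequality λ₀ + λ₁ᵀx + λ₂ᵀd(x) ≥ (f(x) − λ₃)·1_Ξ(x) for all x ∈ ℝⁿ, and λ₂ᵀ(σ − E_P[d(X)]) ≥ 0 for the measure P under consideration. Then for any probability measure P with E_P[X] = μ, and P(X ∈ Ξ) > 0, one has E_P[f(X) | X ∈ Ξ] ≤ λ₃. -/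

import Mathlib

open MeasureTheory

theorem stmt19 (n mdim : ℕ) (P : Measure (Fin n → ℝ)) [IsProbabilityMeasure P]
    (d : (Fin n → ℝ) → Fin mdim → ℝ) (f : (Fin n → ℝ) → ℝ)
    (Ξ : Set (Fin n → ℝ)) (hΞ : MeasurableSet Ξ)
    (muv : Fin n → ℝ) (sigv : Fin mdim → ℝ)
    (l0 l3 : ℝ) (l1 : Fin n → ℝ) (l2 : Fin mdim → ℝ)
    (hXint : ∀ i, Integrable (fun x => x i) P)
    (hdint : ∀ j, Integrable (fun x => d x j) P)
    (hfint : Integrable (fun x => f x * Ξ.indicator (fun _ => (1 : ℝ)) x) P)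
    (hmean : ∀ i, ∫ x, x i ∂P = muv i)
    (hdual1 : l0 + ∑ i, l1 i * muv i + ∑ j, l2 j * sigv j ≤ 0)
    (hpoint : ∀ x, (f x - l3) * Ξ.indicator (fun _ => (1 : ℝ)) x ≤
        l0 + ∑ i, l1 i * x i + ∑ j, l2 j * d x j)
    (hcone : 0 ≤ ∑ j, l2 j * (sigv j - ∫ x, d x j ∂P))
    (hpos : 0 < (P Ξ).toReal) :
    (∫ x in Ξ, f x ∂P) / (P Ξ).toReal ≤ l3 := by
  have hindint : Integrable (Ξ.indicator (fun _ => (1 : ℝ))) P :=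
    (integrable_const 1).indicator hΞ
  have hLint : Integrable (fun x => (f x - l3) * Ξ.indicator (fun _ => (1 : ℝ)) x) P := by
    have heq : (fun x => (f x - l3) * Ξ.indicator (fun _ => (1 : ℝ)) x)
        = fun x => f x * Ξ.indicator (fun _ => (1 : ℝ)) x
          - l3 * Ξ.indicator (fun _ => (1 : ℝ)) x := by
      funext x; ring
    rw [heq]
    exact hfint.sub (hindint.const_mul l3)
  have hsum1 : Integrable (fun x => ∑ i, l1 i * x i) P :=
    integrable_finset_sum _ fun i _ => (hXint i).const_mul _
  have hsum2 : Integrable (fun x => ∑ j, l2 j * d x j) P :=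
    integrable_finset_sum _ fun j _ => (hdint j).const_mul _
  have hRint : Integrable (fun x => l0 + ∑ i, l1 i * x i + ∑ j, l2 j * d x j) P :=
    ((integrable_const l0).add hsum1).add hsum2
  have hI := integral_mono hLint hRint hpoint
  have hR : ∫ x, (l0 + ∑ i, l1 i * x i + ∑ j, l2 j * d x j) ∂P
      = l0 + ∑ i, l1 i * muv i + ∑ j, l2 j * ∫ x, d x j ∂P := by
    have h01 : Integrable (fun x => l0 + ∑ i, l1 i * x i) P := (integrable_const l0).add hsum1
    rw [integral_add h01 hsum2, integral_add (integrable_const l0) hsum1, integral_const,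
        integral_finset_sum _ fun i _ => (hXint i).const_mul _,
        integral_finset_sum _ fun j _ => (hdint j).const_mul _]
    simp [integral_const_mul, hmean]
  have hL : ∫ x, (f x - l3) * Ξ.indicator (fun _ => (1 : ℝ)) x ∂P
      = (∫ x in Ξ, f x ∂P) - l3 * (P Ξ).toReal := by
    have heq : (fun x => (f x - l3) * Ξ.indicator (fun _ => (1 : ℝ)) x)
        = fun x => f x * Ξ.indicator (fun _ => (1 : ℝ)) x
          - l3 * Ξ.indicator (fun _ => (1 : ℝ)) x := by
      funext x; ring
    have hfeq : (fun x => f x * Ξ.indicator (fun _ => (1 : ℝ)) x) = Ξ.indicator f := by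
      funext x
      by_cases hx : x ∈ Ξ <;> simp [Set.indicator_apply, hx]
    rw [heq, integral_sub hfint (hindint.const_mul l3), hfeq,
        integral_indicator hΞ, integral_const_mul]
    have : ∫ x, Ξ.indicator (fun _ => (1 : ℝ)) x ∂P = (P Ξ).toReal := by
      rw [integral_indicator hΞ]
      simp [Measure.real]
    rw [this]
  have hcone' : ∑ j, l2 j * ∫ x, d x j ∂P ≤ ∑ j, l2 j * sigv j := by
    have : ∑ j, l2 j * (sigv j - ∫ x, d x j ∂P)
        = ∑ j, l2 j * sigv j - ∑ j, l2 j * ∫ x, d x j ∂P := by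
      rw [← Finset.sum_sub_distrib]; congr 1; funext j; ring
    linarith [hcone, this ▸ hcone]
  have key : (∫ x in Ξ, f x ∂P) - l3 * (P Ξ).toReal ≤ 0 := by
    rw [hL, hR] at hI
    linarith
  rw [div_le_iff₀ hpos]
  linarith
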